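/- Let (V, ⟨·,·⟩) be a real inner product space, X ∈ V with ‖X‖ < 1, F(y) = (√⟨y,y⟩ + ⟨X,y⟩)²/√⟨y,y⟩, and let Y, U ∈ V be orthonormal (⟨Y,Y⟩ = ⟨U,U⟩ = 1, ⟨Y,U⟩ = 0). Then g_Y(Y,Y)·g_Y(U,U) − g_Y(Y,U)² = (1 + ⟨X,Y⟩)⁶ (2⟨X,U⟩² − ⟨X,Y⟩² + 1). -/

import Mathlib

noncomputable def Fab {V : Type*} [NormedAddCommGroup V] [InnerProductSpace ℝ V]
    (X : V) (y : V) : ℝ :=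
  (Real.sqrt (inner ℝ y y) + (inner ℝ X y : ℝ))^2 / Real.sqrt (inner ℝ y y)

noncomputable def gfun {V : Type*} [NormedAddCommGroup V] [InnerProductSpace ℝ V]
    (F : V → ℝ) (Y U W : V) : ℝ :=
  (deriv (fun s : ℝ => deriv (fun t : ℝ => (F (Y + s • U + t • W))^2) 0) 0) / 2

open Real Filter

private lemma sqrtq (a : ℝ) (ha : 0 < a) (t : ℝ) :
    HasDerivAt (fun u : ℝ => Real.sqrt (a + u^2)) (t / Real.sqrt (a + t^2)) t := by
  have h1 : HasDerivAt (fun u : ℝ => a + u^2) (2*t) t := by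
    simpa using (hasDerivAt_pow 2 t).const_add a
  have h2 := (Real.hasDerivAt_sqrt (by positivity)).comp t h1
  refine h2.congr_deriv ?_
  have hs : Real.sqrt (a+t^2) ≠ 0 := by positivity
  field_simp

private lemma psi_deriv (b0 b1 : ℝ) (u : ℝ) :
    HasDerivAt (fun u : ℝ => (Real.sqrt (1+u^2) + (b0 + u*b1))^4 / (1+u^2))
      ((4*(Real.sqrt (1+u^2) + (b0 + u*b1))^3 * (u/Real.sqrt (1+u^2) + b1) * (1+u^2)
        - (Real.sqrt (1+u^2) + (b0 + u*b1))^4 * (2*u)) / (1+u^2)^2) u := by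
  have hq : HasDerivAt (fun u : ℝ => 1+u^2) (2*u) u := by
    simpa using (hasDerivAt_pow 2 u).const_add 1
  have hp : HasDerivAt (fun u : ℝ => Real.sqrt (1+u^2) + (b0 + u*b1))
      (u/Real.sqrt (1+u^2) + b1) u := by
    simpa using (sqrtq 1 one_pos u).fun_add (((hasDerivAt_id u).mul_const b1).const_add b0)
  have h := (hp.fun_pow 4).fun_div hq (by positivity)
  refine h.congr_deriv (by norm_num)

private lemma psi_second (b0 b1 : ℝ) :
    deriv (deriv (fun u : ℝ => (Real.sqrt (1+u^2) + (b0 + u*b1))^4 / (1+u^2))) 0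
      = 12*(1+b0)^2*b1^2 + 4*(1+b0)^3 - 2*(1+b0)^4 := by
  have hd : deriv (fun u : ℝ => (Real.sqrt (1+u^2) + (b0 + u*b1))^4 / (1+u^2))
      = fun u => (4*(Real.sqrt (1+u^2) + (b0 + u*b1))^3 * (u/Real.sqrt (1+u^2) + b1) * (1+u^2)
        - (Real.sqrt (1+u^2) + (b0 + u*b1))^4 * (2*u)) / (1+u^2)^2 :=
    funext fun u => (psi_deriv b0 b1 u).deriv
  rw [hd]
  have hr : HasDerivAt (fun u : ℝ => Real.sqrt (1+u^2)) 0 0 := by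
    simpa using sqrtq 1 one_pos 0
  have hq : HasDerivAt (fun u : ℝ => 1+u^2) 0 0 := by
    simpa using (hasDerivAt_pow 2 (0:ℝ)).const_add 1
  have hp : HasDerivAt (fun u : ℝ => Real.sqrt (1+u^2) + (b0 + u*b1)) b1 0 := by
    simpa using hr.fun_add (((hasDerivAt_id (0:ℝ)).mul_const b1).const_add b0)
  have hrne : Real.sqrt (1+(0:ℝ)^2) ≠ 0 := by norm_num
  have hpd : HasDerivAt (fun u : ℝ => u / Real.sqrt (1+u^2) + b1) 1 0 := by
    have := ((hasDerivAt_id (0:ℝ)).fun_div hr hrne).add_const b1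
    simpa using this
  have h2u : HasDerivAt (fun u : ℝ => 2*u) 2 0 := by
    simpa using (hasDerivAt_id (0:ℝ)).const_mul 2
  have hN := ((((hp.fun_pow 3).const_mul 4).fun_mul hpd).fun_mul hq).fun_sub ((hp.fun_pow 4).fun_mul h2u)
  have hD := hq.fun_pow 2
  have h := hN.fun_div hD (by norm_num)
  rw [h.deriv]
  norm_num [Real.sqrt_one]
  ring

private lemma fab_sq {V : Type*} [NormedAddCommGroup V] [InnerProductSpace ℝ V]
    (X y : V) (hq : (0:ℝ) < inner ℝ y y) :
    (Fab X y)^2 = (Real.sqrt (inner ℝ y y) + (inner ℝ X y : ℝ))^4 / (inner ℝ y y : ℝ) := by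
  unfold Fab
  rw [div_pow, ← pow_mul, Real.sq_sqrt hq.le]

private lemma mixed_deriv (a b0 b1 : ℝ) (ha : 0 < a) :
    deriv (fun t : ℝ => (Real.sqrt (a^2+t^2) + (a*b0 + t*b1))^4 / (a^2+t^2)) 0
      = 4*a*(1+b0)^3*b1 := by
  have hr : HasDerivAt (fun t : ℝ => Real.sqrt (a^2+t^2)) 0 0 := by
    simpa using sqrtq (a^2) (by positivity) 0
  have hq : HasDerivAt (fun t : ℝ => a^2+t^2) 0 0 := by
    simpa using (hasDerivAt_pow 2 (0:ℝ)).const_add (a^2)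
  have hp : HasDerivAt (fun t : ℝ => Real.sqrt (a^2+t^2) + (a*b0 + t*b1)) b1 0 := by
    simpa using hr.fun_add (((hasDerivAt_id (0:ℝ)).mul_const b1).const_add (a*b0))
  have h := (hp.fun_pow 4).fun_div hq (by positivity)
  rw [h.deriv]
  have h0 : Real.sqrt (a^2+(0:ℝ)^2) = a := by
    rw [show a^2+(0:ℝ)^2 = a^2 by ring, Real.sqrt_sq ha.le]
  rw [h0]
  have hane : a ≠ 0 := ha.ne'
  field_simp
  ring

theorem stmt_3 (V : Type*) [NormedAddCommGroup V] [InnerProductSpace ℝ V]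
    (X : V) (hX : ‖X‖ < 1) (Y U : V)
    (hY : (inner ℝ Y Y : ℝ) = 1) (hU : (inner ℝ U U : ℝ) = 1) (hYU : (inner ℝ Y U : ℝ) = 0) :
    gfun (Fab X) Y Y Y * gfun (Fab X) Y U U - (gfun (Fab X) Y Y U)^2 =
      (1 + (inner ℝ X Y : ℝ))^6 * (2 * (inner ℝ X U : ℝ)^2 - (inner ℝ X Y : ℝ)^2 + 1) := by
  set b0 : ℝ := inner ℝ X Y with hb0
  set b1 : ℝ := inner ℝ X U with hb1
  have hq3 : ∀ a c : ℝ, (inner ℝ (a•Y + c•U) (a•Y + c•U) : ℝ) = a^2 + c^2 := by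
    intro a c
    simp [real_inner_add_add_self, real_inner_smul_left, real_inner_smul_right, hY, hU, hYU, -inner_self_eq_norm_sq_to_K]
    ring
  have hb3 : ∀ a c : ℝ, (inner ℝ X (a•Y + c•U) : ℝ) = a*b0 + c*b1 := by
    intro a c
    simp [inner_add_right, real_inner_smul_right, hb0, hb1]
  have hqY : ∀ c : ℝ, (inner ℝ (c•Y) (c•Y) : ℝ) = c^2 := by
    intro c
    simp [real_inner_smul_left, real_inner_smul_right, hY, -inner_self_eq_norm_sq_to_K]
    ring
  have hbY : ∀ c : ℝ, (inner ℝ X (c•Y) : ℝ) = c*b0 := by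
    intro c
    simp [real_inner_smul_right, hb0]
  -- g(U,U)
  have g2 : gfun (Fab X) Y U U = (12*(1+b0)^2*b1^2 + 4*(1+b0)^3 - 2*(1+b0)^4)/2 := by
    unfold gfun
    have hout : (fun s : ℝ => deriv (fun t : ℝ => (Fab X (Y + s•U + t•U))^2) 0)
        = deriv (fun u : ℝ => (Real.sqrt (1+u^2) + (b0 + u*b1))^4 / (1+u^2)) := by
      funext s
      have hfe : (fun t : ℝ => (Fab X (Y + s•U + t•U))^2)
          = fun t => (Real.sqrt (1+(s+t)^2) + (b0 + (s+t)*b1))^4 / (1+(s+t)^2) := by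
        funext t
        have hy : Y + s•U + t•U = (1:ℝ)•Y + (s+t)•U := by module
        rw [hy, fab_sq X _ (by rw [hq3]; positivity), hq3, hb3]
        norm_num
      rw [hfe]
      have := deriv_comp_const_add
        (fun u : ℝ => (Real.sqrt (1+u^2) + (b0 + u*b1))^4 / (1+u^2)) s 0
      simpa using this
    rw [hout, psi_second b0 b1]
  -- g(Y,U)
  have g3 : gfun (Fab X) Y Y U = 2*(1+b0)^3*b1 := by
    unfold gfun
    have hev : (fun s : ℝ => deriv (fun t : ℝ => (Fab X (Y + s•Y + t•U))^2) 0)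
        =ᶠ[nhds (0:ℝ)] (fun s => 4*(1+s)*(1+b0)^3*b1) := by
      filter_upwards [eventually_gt_nhds (show (-1:ℝ) < 0 by norm_num)] with s hs
      have ha : (0:ℝ) < 1+s := by linarith
      have hfe : (fun t : ℝ => (Fab X (Y + s•Y + t•U))^2)
          = fun t => (Real.sqrt ((1+s)^2+t^2) + ((1+s)*b0 + t*b1))^4 / ((1+s)^2+t^2) := by
        funext t
        have hy : Y + s•Y + t•U = (1+s)•Y + t•U := by module
        rw [hy, fab_sq X _ (by rw [hq3]; positivity), hq3, hb3]
      rw [hfe, mixed_deriv (1+s) b0 b1 ha]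
    rw [hev.deriv_eq]
    have hid : HasDerivAt (fun s : ℝ => 1+s) 1 0 := by
      simpa using (hasDerivAt_id (0:ℝ)).const_add 1
    have h : HasDerivAt (fun s : ℝ => 4*(1+s)*(1+b0)^3*b1) (4*(1+b0)^3*b1) 0 := by
      have := ((hid.const_mul 4).mul_const ((1+b0)^3)).mul_const b1
      refine this.congr_deriv ?_
      ring
    rw [h.deriv]
    ring
  -- g(Y,Y)
  have fabc : ∀ c : ℝ, 0 < c → (Fab X (c•Y))^2 = c^2*(1+b0)^4 := by
    intro c hc
    rw [fab_sq X _ (by rw [hqY]; positivity), hqY, hbY, Real.sqrt_sq hc.le]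
    field_simp
  have g1 : gfun (Fab X) Y Y Y = (1+b0)^4 := by
    unfold gfun
    have hev : (fun s : ℝ => deriv (fun t : ℝ => (Fab X (Y + s•Y + t•Y))^2) 0)
        =ᶠ[nhds (0:ℝ)] (fun s => 2*(1+s)*(1+b0)^4) := by
      filter_upwards [eventually_gt_nhds (show (-1/2:ℝ) < 0 by norm_num)] with s hs
      have hev2 : (fun t : ℝ => (Fab X (Y + s•Y + t•Y))^2)
          =ᶠ[nhds (0:ℝ)] (fun t => (1+s+t)^2*(1+b0)^4) := by
        filter_upwards [eventually_gt_nhds (show (-1/2:ℝ) < 0 by norm_num)] with t ht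
        have hy : Y + s•Y + t•Y = (1+s+t)•Y := by module
        rw [hy, fabc (1+s+t) (by linarith)]
      rw [hev2.deriv_eq]
      have hid : HasDerivAt (fun t : ℝ => 1+s+t) 1 0 := by
        simpa using (hasDerivAt_id (0:ℝ)).const_add (1+s)
      have h : HasDerivAt (fun t : ℝ => (1+s+t)^2*(1+b0)^4) (2*(1+s)*(1+b0)^4) 0 := by
        have := (hid.fun_pow 2).mul_const ((1+b0)^4)
        refine this.congr_deriv ?_
        norm_num
      rw [h.deriv]
    rw [hev.deriv_eq]
    have hid : HasDerivAt (fun s : ℝ => 1+s) 1 0 := by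
      simpa using (hasDerivAt_id (0:ℝ)).const_add 1
    have h : HasDerivAt (fun s : ℝ => 2*(1+s)*(1+b0)^4) (2*(1+b0)^4) 0 := by
      have := (hid.const_mul 2).mul_const ((1+b0)^4)
      refine this.congr_deriv ?_
      ring
    rw [h.deriv]
    ring
  rw [g1, g2, g3]
  ring
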